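/- For every integer k ≥ 0 and every z with 0 < z < 1, one has 2(k+1) Σ_{n=0}^{∞} ((k+2)_n/((3/2)_n)) z^n = ((3/2)_k/k!) · (arcsin(√z)/√z) · (1−z)^{−k−3/2} + Σ_{ℓ=0}^{k} ((k+3/2−ℓ)_ℓ/((k+1−ℓ)_ℓ)) · (1−z)^{−ℓ−1}. -/

import Mathlib

open Finset Real

/-- The Pochhammer symbol `(x)_n = x (x+1) ⋯ (x+n-1)`. -/
noncomputable def poch (x : ℝ) (n : ℕ) : ℝ := (ascPochhammer ℝ n).eval x



lemma poch_zero (x : ℝ) : poch x 0 = 1 := by simp [poch]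

lemma poch_succ (x : ℝ) (n : ℕ) : poch x (n+1) = poch x n * (x + n) := by
  simp [poch, ascPochhammer_succ_right]

lemma poch_pos {x : ℝ} (hx : 0 < x) (n : ℕ) : 0 < poch x n := by
  induction n with
  | zero => simp [poch_zero]
  | succ n ih => rw [poch_succ]; positivity

lemma poch_one (n : ℕ) : poch 1 n = n.factorial := by
  induction n with
  | zero => simp [poch_zero]
  | succ n ih => rw [poch_succ, ih, Nat.factorial_succ]; push_cast; ring

noncomputable def aa (n : ℕ) : ℝ := (n.factorial : ℝ) / poch (3/2) n

lemma aa_pos (n : ℕ) : 0 < aa n := by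
  unfold aa
  have := poch_pos (x := 3/2) (by norm_num) n
  positivity

lemma aa_zero : aa 0 = 1 := by simp [aa, poch_zero]

lemma aa_succ (n : ℕ) : aa (n+1) = aa n * ((n+1) / (n + 3/2)) := by
  have h := poch_pos (x := 3/2) (by norm_num) n
  unfold aa
  rw [poch_succ, Nat.factorial_succ]
  push_cast
  field_simp
  ring

lemma aa_le_one (n : ℕ) : aa n ≤ 1 := by
  induction n with
  | zero => simp [aa_zero]
  | succ n ih =>
    rw [aa_succ]
    have h1 : ((n:ℝ)+1) / (n + 3/2) ≤ 1 := by
      rw [div_le_one (by positivity)]; linarith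
    have := aa_pos n
    nlinarith

lemma aa_rec (n : ℕ) : (2*(n:ℝ)+3) * aa (n+1) = (2*n+2) * aa n := by
  rw [aa_succ]
  have hp : (n:ℝ) + 3/2 ≠ 0 := by positivity
  field_simp

lemma summable_deriv_series {r : ℝ} (h : |r| < 1) :
    Summable (fun n : ℕ => (2*(n:ℝ)+1) * r^(2*n)) := by
  have hr2 : ‖r^2‖ < 1 := by
    rw [Real.norm_eq_abs, abs_pow]
    exact pow_lt_one₀ (abs_nonneg r) h (by norm_num)
  have h1 : Summable (fun n : ℕ => (n:ℝ)^1 * (r^2)^n) :=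
    summable_pow_mul_geometric_of_norm_lt_one 1 hr2
  have h2 : Summable (fun n : ℕ => (r^2)^n) := summable_geometric_of_norm_lt_one hr2
  have := (h1.mul_left 2).add h2
  apply this.congr
  intro n
  rw [pow_mul]
  ring


noncomputable def ff (x : ℝ) : ℝ := ∑' n : ℕ, aa n * x^(2*n+1)

lemma summable_ff {x : ℝ} (hx : |x| < 1) : Summable (fun n : ℕ => aa n * x^(2*n+1)) := by
  apply Summable.of_norm_bounded (summable_deriv_series (r := |x|) (by rwa [abs_abs]))
  intro n
  show ‖aa n * x^(2*n+1)‖ ≤ (2*(n:ℝ)+1) * |x|^(2*n)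
  rw [Real.norm_eq_abs, abs_mul, abs_of_pos (aa_pos n), abs_pow, pow_succ]
  calc aa n * (|x|^(2*n) * |x|) ≤ 1 * (|x|^(2*n) * 1) := by
        gcongr
        all_goals first | exact aa_le_one n | exact hx.le | positivity
    _ ≤ (2*(n:ℝ)+1) * |x|^(2*n) := by nlinarith [pow_nonneg (abs_nonneg x) (2*n)]

lemma summable_ffd {x : ℝ} (hx : |x| < 1) :
    Summable (fun n : ℕ => (2*(n:ℝ)+1) * aa n * x^(2*n)) := by
  apply Summable.of_norm_bounded (summable_deriv_series (r := |x|) (by rwa [abs_abs]))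
  intro n
  show ‖(2*(n:ℝ)+1) * aa n * x^(2*n)‖ ≤ (2*(n:ℝ)+1) * |x|^(2*n)
  have h0 : (0:ℝ) ≤ 2*(n:ℝ)+1 := by positivity
  rw [Real.norm_eq_abs, abs_mul, abs_mul, abs_of_nonneg h0, abs_of_pos (aa_pos n), abs_pow]
  calc (2*(n:ℝ)+1) * aa n * |x|^(2*n) ≤ (2*(n:ℝ)+1) * 1 * |x|^(2*n) := by
        gcongr
        exact aa_le_one n
    _ = (2*(n:ℝ)+1) * |x|^(2*n) := by ring

lemma hasDerivAt_ff {r x : ℝ} (hr : r < 1) (hx : x ∈ Set.Ioo (-r) r) :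
    HasDerivAt ff (∑' n : ℕ, (2*(n:ℝ)+1) * aa n * x^(2*n)) x := by
  have hr0 : 0 < r := by rcases hx with ⟨h1, h2⟩; linarith
  have hrabs : |r| < 1 := by rw [abs_of_pos hr0]; exact hr
  refine hasDerivAt_tsum_of_isPreconnected (u := fun n : ℕ => (2*(n:ℝ)+1) * r^(2*n))
    (g := fun (n : ℕ) (y : ℝ) => aa n * y^(2*n+1))
    (g' := fun (n : ℕ) (y : ℝ) => (2*(n:ℝ)+1) * aa n * y^(2*n))
    (summable_deriv_series hrabs) isOpen_Ioo (convex_Ioo _ _).isPreconnected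
    ?_ ?_ (y₀ := 0) ⟨by linarith, hr0⟩ ?_ hx
  · intro n y _
    have := (hasDerivAt_pow (2*n+1) y).const_mul (aa n)
    convert this using 1
    · rfl
    push_cast [Nat.add_sub_cancel]
    ring
  · intro n y hy
    have hyr : |y| ≤ r := by
      rw [abs_le]; exact ⟨hy.1.le, hy.2.le⟩
    have h0 : (0:ℝ) ≤ 2*(n:ℝ)+1 := by positivity
    show ‖(2*(n:ℝ)+1) * aa n * y^(2*n)‖ ≤ (2*(n:ℝ)+1) * r^(2*n)
    rw [Real.norm_eq_abs, abs_mul, abs_mul, abs_of_nonneg h0, abs_of_pos (aa_pos n), abs_pow]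
    calc (2*(n:ℝ)+1) * aa n * |y|^(2*n) ≤ (2*(n:ℝ)+1) * 1 * r^(2*n) := by
          gcongr
          all_goals first | exact aa_le_one n | exact hyr | positivity
      _ = (2*(n:ℝ)+1) * r^(2*n) := by ring
  · apply Summable.congr summable_zero
    intro n
    simp

lemma key_ode {y : ℝ} (hy : |y| < 1) :
    (1 - y^2) * (∑' n : ℕ, (2*(n:ℝ)+1) * aa n * y^(2*n)) - y * ff y = 1 := by
  have hD : HasSum (fun n : ℕ => (2*(n:ℝ)+1) * aa n * y^(2*n))
      (∑' n : ℕ, (2*(n:ℝ)+1) * aa n * y^(2*n)) := (summable_ffd hy).hasSum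
  have hF : HasSum (fun n : ℕ => aa n * y^(2*n+1)) (ff y) := (summable_ff hy).hasSum
  set D := ∑' n : ℕ, (2*(n:ℝ)+1) * aa n * y^(2*n) with hDdef
  have h2 : HasSum (fun n : ℕ => (2*(n:ℝ)+2) * aa n * y^(2*n+2)) (y^2 * D + y * ff y) := by
    have h := (hD.mul_left (y^2)).add (hF.mul_left y)
    convert h using 1
    · rfl
    funext n
    ring
  have h3 : HasSum (fun n : ℕ => (2*(n:ℝ)+2) * aa n * y^(2*n+2)) (D - 1) := by
    have h := (hasSum_nat_add_iff
        (f := fun n : ℕ => (2*(n:ℝ)+1) * aa n * y^(2*n)) 1 (g := D - 1)).2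
        (by simpa [aa_zero] using hD)
    convert h using 1
    · rfl
    funext n
    push_cast
    linear_combination (-(y^(2*n+2))) * (aa_rec n)
  have hu := h2.unique h3
  linear_combination -hu

lemma ff_zero : ff 0 = 0 := by
  unfold ff
  convert tsum_zero with n
  simp

lemma ff_eq {x : ℝ} (h0 : 0 < x) (h1 : x < 1) :
    Real.sqrt (1 - x^2) * ff x = Real.arcsin x := by
  set r := (x+1)/2 with hrdef
  have hr1 : r < 1 := by rw [hrdef]; linarith
  have hxr : x < r := by rw [hrdef]; linarith
  have hr0 : 0 < r := by rw [hrdef]; linarith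
  set g : ℝ → ℝ := fun t => Real.sqrt (1 - t^2) * ff t - Real.arcsin t with hgdef
  have hderiv : ∀ y ∈ Set.Ioo (-r) r, HasDerivAt g 0 y := by
    intro y hy
    have hy1 : |y| < 1 := by
      rw [abs_lt]
      exact ⟨by linarith [hy.1], by linarith [hy.2]⟩
    have habs := abs_lt.1 hy1
    have hs : (0:ℝ) < 1 - y^2 := by nlinarith [sq_abs y, abs_nonneg y]
    have hs0 : 0 < Real.sqrt (1 - y^2) := Real.sqrt_pos.mpr hs
    have hsne : Real.sqrt (1 - y^2) ≠ 0 := ne_of_gt hs0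
    have hD := hasDerivAt_ff hr1 hy
    set Dv := ∑' n : ℕ, (2*(n:ℝ)+1) * aa n * y^(2*n) with hDv
    set s := Real.sqrt (1 - y^2) with hsdef
    have hq : HasDerivAt (fun t : ℝ => 1 - t^2) (-(2*y)) y := by
      simpa using ((hasDerivAt_pow 2 y).const_sub 1)
    have hsq : HasDerivAt (fun t => Real.sqrt (1 - t^2)) (-(2*y) / (2 * s)) y :=
      hq.sqrt (ne_of_gt hs)
    have harc : HasDerivAt Real.arcsin (1 / s) y :=
      Real.hasDerivAt_arcsin habs.1.ne' habs.2.ne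
    have hmul := (hsq.mul hD).sub harc
    have hss : s * s = 1 - y^2 := Real.mul_self_sqrt hs.le
    have hkey := key_ode hy1
    rw [← hDv] at hkey
    have hval : -(2*y) / (2*s) * ff y + s * Dv - 1 / s = 0 := by
      have e1 : s * (-(2*y)/(2*s)) = -y := by
        field_simp
      have e2 : s * (1/s) = 1 := by
        field_simp
      have hmul0 : s * (-(2*y) / (2*s) * ff y + s * Dv - 1 / s)
          = (1 - y^2) * Dv - y * ff y - 1 := by
        calc s * (-(2*y) / (2*s) * ff y + s * Dv - 1 / s)
            = (s * (-(2*y)/(2*s))) * ff y + (s*s)*Dv - s*(1/s) := by ring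
          _ = (-y)*ff y + (1-y^2)*Dv - 1 := by rw [e1, e2, hss]
          _ = (1 - y^2) * Dv - y * ff y - 1 := by ring
      have : s * (-(2*y) / (2*s) * ff y + s * Dv - 1 / s) = 0 := by
        rw [hmul0, hkey]; ring
      exact (mul_eq_zero.mp this).resolve_left hsne
    have hmul' : HasDerivAt g (-(2 * y) / (2 * s) * ff y + s * Dv - 1 / s) y := hmul
    rwa [hval] at hmul'
  have hcont : ContinuousOn g (Set.Icc 0 x) := by
    intro y hy
    exact ((hderiv y ⟨by linarith [hy.1], by linarith [hy.2]⟩).continuousAt).continuousWithinAt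
  obtain ⟨c, hc, hceq⟩ := exists_hasDerivAt_eq_slope g (fun _ => (0:ℝ)) h0 hcont
    (fun y hy => hderiv y ⟨by linarith [hy.1], by linarith [hy.2]⟩)
  have hg0 : g 0 = 0 := by
    simp [hgdef, ff_zero]
  have hgx : g x = 0 := by
    have hx0 : x - 0 ≠ 0 := by simpa using h0.ne'
    field_simp [hg0] at hceq
    simpa [hg0] using hceq.symm
  simpa [hgdef, sub_eq_zero] using hgx

lemma hasSum_G {z : ℝ} (h0 : 0 < z) (h1 : z < 1) :
    HasSum (fun n : ℕ => aa n * z^n)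
      (Real.arcsin (Real.sqrt z) / (Real.sqrt z * Real.sqrt (1 - z))) := by
  set x := Real.sqrt z with hxdef
  have hx0 : 0 < x := Real.sqrt_pos.mpr h0
  have hx1 : x < 1 := by
    rw [hxdef, show (1:ℝ) = Real.sqrt 1 by simp]
    exact Real.sqrt_lt_sqrt h0.le h1
  have hx2 : x^2 = z := Real.sq_sqrt h0.le
  have habs : |x| < 1 := by rwa [abs_of_pos hx0]
  have hsum : HasSum (fun n : ℕ => aa n * x^(2*n+1)) (ff x) := (summable_ff habs).hasSum
  have heq := ff_eq hx0 hx1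
  have hsne : Real.sqrt (1 - x^2) ≠ 0 := by
    have : (0:ℝ) < 1 - x^2 := by nlinarith
    positivity
  have hffx : ff x = Real.arcsin x / Real.sqrt (1 - x^2) := by
    field_simp at heq ⊢
    linarith [heq]
  have hdiv := hsum.div_const x
  have : (fun n : ℕ => aa n * x^(2*n+1) / x) = fun n : ℕ => aa n * z^n := by
    funext n
    rw [pow_succ, pow_mul, hx2]
    field_simp
  rw [this] at hdiv
  rw [hffx] at hdiv
  convert hdiv using 1
  · rfl
  rw [← hx2] at h1 ⊢
  rw [div_div]
  ring

lemma poch_succ_left (x : ℝ) (n : ℕ) : poch x (n+1) = x * poch (x+1) n := by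
  unfold poch
  rw [ascPochhammer_succ_left]
  simp [Polynomial.eval_comp]

lemma step {b z S : ℝ} (hb : 1 ≤ b) (h0 : 0 < z) (h1 : z < 1)
    (hS : HasSum (fun n : ℕ => poch b n / poch (3/2) n * z ^ n) S) :
    HasSum (fun n : ℕ => poch (b+1) n / poch (3/2) n * z ^ n)
      (((b - 1/2) * S + 1/2) / (b * (1 - z))) := by
  have hb0 : 0 < b := lt_of_lt_of_le one_pos hb
  have hp32 : ∀ n : ℕ, 0 < poch (3/2) n := fun n => poch_pos (by norm_num) n
  have hpb1 : ∀ n : ℕ, 0 < poch (b+1) n := fun n => poch_pos (by linarith) n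
  have htpos : ∀ n : ℕ, 0 < poch (b+1) n / poch (3/2) n * z ^ n := by
    intro n
    have := hp32 n; have := hpb1 n
    positivity
  -- summability via ratio test
  have hsum : Summable (fun n : ℕ => poch (b+1) n / poch (3/2) n * z ^ n) := by
    apply summable_of_ratio_norm_eventually_le (r := (1+z)/2) (by linarith)
    obtain ⟨N, hN⟩ := exists_nat_ge (2*z*(b+1)/(1-z))
    filter_upwards [Filter.eventually_ge_atTop N] with n hn
    have hnN : (N:ℝ) ≤ n := by exact_mod_cast hn
    have hzb : 2*z*(b+1) ≤ (n:ℝ)*(1-z) := by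
      have h2 : 2*z*(b+1)/(1-z) ≤ (n:ℝ) := le_trans hN hnN
      have h3 : 0 < 1 - z := by linarith
      calc 2*z*(b+1) = (2*z*(b+1)/(1-z)) * (1-z) := by field_simp
        _ ≤ (n:ℝ) * (1-z) := by nlinarith
    have hratio : (b+1+(n:ℝ))*z/((n:ℝ)+3/2) ≤ (1+z)/2 := by
      rw [div_le_div_iff₀ (by positivity) (by norm_num)]
      nlinarith
    have hrec : poch (b+1) (n+1) / poch (3/2) (n+1) * z ^ (n+1)
        = ((b+1+(n:ℝ))*z/((n:ℝ)+3/2)) * (poch (b+1) n / poch (3/2) n * z ^ n) := by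
      rw [poch_succ, poch_succ, pow_succ]
      have h32 : (0:ℝ) < 3/2 + n := by positivity
      have := (hp32 n).ne'
      field_simp
      ring
    rw [Real.norm_eq_abs, Real.norm_eq_abs, abs_of_pos (htpos (n+1)), abs_of_pos (htpos n), hrec]
    exact mul_le_mul_of_nonneg_right hratio (htpos n).le
  have hT := hsum.hasSum
  set T := ∑' n : ℕ, poch (b+1) n / poch (3/2) n * z ^ n with hTdef
  -- shifted series
  have hT1 : HasSum (fun n : ℕ => poch (b+1) (n+1) / poch (3/2) (n+1) * z ^ (n+1)) (T - 1) := by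
    refine (hasSum_nat_add_iff (f := fun n : ℕ => poch (b+1) n / poch (3/2) n * z ^ n) 1
      (g := T - 1)).2 ?_
    simpa [poch_zero] using hT
  have hS1 : HasSum (fun n : ℕ => poch b (n+1) / poch (3/2) (n+1) * z ^ (n+1)) (S - 1) := by
    refine (hasSum_nat_add_iff (f := fun n : ℕ => poch b n / poch (3/2) n * z ^ n) 1
      (g := S - 1)).2 ?_
    simpa [poch_zero] using hS
  have hcomb : HasSum (fun n : ℕ => poch (b+1) (n+1) / poch (3/2) (n+1) * z ^ (n+1)
      - z * (poch (b+1) n / poch (3/2) n * z ^ n)) (T - 1 - z * T) := hT1.sub (hT.mul_left z)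
  have hcomb2 : HasSum (fun n : ℕ => (b - 1/2)/b * (poch b (n+1) / poch (3/2) (n+1) * z ^ (n+1)))
      ((b - 1/2)/b * (S - 1)) := hS1.mul_left _
  have hid : (fun n : ℕ => poch (b+1) (n+1) / poch (3/2) (n+1) * z ^ (n+1)
      - z * (poch (b+1) n / poch (3/2) n * z ^ n))
      = fun n : ℕ => (b - 1/2)/b * (poch b (n+1) / poch (3/2) (n+1) * z ^ (n+1)) := by
    funext n
    rw [poch_succ_left b n, poch_succ (b+1) n, poch_succ (3/2) n, pow_succ]
    have h1 := (hp32 n).ne'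
    have h2 : ((3:ℝ)/2 + n) ≠ 0 := by positivity
    field_simp
    ring
  rw [hid] at hcomb
  have huniq := hcomb.unique hcomb2
  have hTeq : T = ((b - 1/2) * S + 1/2) / (b * (1 - z)) := by
    have hz1 : (1:ℝ) - z ≠ 0 := by linarith
    field_simp at huniq ⊢
    linarith [huniq]
  rwa [hTeq] at hT

noncomputable def RR (k : ℕ) (z : ℝ) : ℝ :=
  poch (3 / 2) k / (k.factorial : ℝ) * (Real.arcsin (Real.sqrt z) / Real.sqrt z) *
      (1 - z) ^ (-(k : ℝ) - 3 / 2)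
    + ∑ ℓ ∈ Finset.range (k + 1),
        poch ((k : ℝ) + 3 / 2 - ℓ) ℓ / poch ((k : ℝ) + 1 - ℓ) ℓ * (1 - z) ^ (-(ℓ : ℤ) - 1)

lemma c_succ (k ℓ : ℕ) (hℓ : ℓ ≤ k) :
    poch (((k:ℝ)+1) + 3/2 - ((ℓ:ℝ)+1)) (ℓ+1) / poch (((k:ℝ)+1) + 1 - ((ℓ:ℝ)+1)) (ℓ+1)
      = ((k:ℝ)+3/2)/((k:ℝ)+1)
        * (poch ((k:ℝ)+3/2-ℓ) ℓ / poch ((k:ℝ)+1-ℓ) ℓ) := by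
  have e1 : ((k:ℝ)+1) + 3/2 - ((ℓ:ℝ)+1) = (k:ℝ)+3/2-ℓ := by ring
  have e2 : ((k:ℝ)+1) + 1 - ((ℓ:ℝ)+1) = (k:ℝ)+1-ℓ := by ring
  rw [e1, e2, poch_succ, poch_succ]
  have hle : (ℓ:ℝ) ≤ k := by exact_mod_cast hℓ
  have hp1 : 0 < poch ((k:ℝ)+3/2-ℓ) ℓ := poch_pos (by linarith) ℓ
  have hp2 : 0 < poch ((k:ℝ)+1-ℓ) ℓ := poch_pos (by linarith) ℓ
  have e3 : (k:ℝ)+3/2-ℓ+ℓ = (k:ℝ)+3/2 := by ring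
  have e4 : (k:ℝ)+1-ℓ+ℓ = (k:ℝ)+1 := by ring
  rw [e3, e4]
  have hk1 : ((k:ℝ)+1) ≠ 0 := by positivity
  field_simp

set_option maxHeartbeats 1000000 in
lemma RR_rec (k : ℕ) {z : ℝ} (h0 : 0 < z) (h1 : z < 1) :
    RR (k+1) z = ((2*(k:ℝ)+3)/(2*(k:ℝ)+2) * RR k z + 1)/(1-z) := by
  have hw : (0:ℝ) < 1 - z := by linarith
  have hwne : (1:ℝ) - z ≠ 0 := hw.ne'
  set G := Real.arcsin (Real.sqrt z) / Real.sqrt z with hG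
  have hA : poch (3/2) (k+1) / ((k+1).factorial : ℝ) * G * (1 - z) ^ (-((k+1:ℕ) : ℝ) - 3/2)
      = (2*(k:ℝ)+3)/(2*(k:ℝ)+2) * (poch (3/2) k / (k.factorial : ℝ) * G * (1 - z) ^ (-(k:ℝ) - 3/2)) / (1-z) := by
    have hexp : (-((k+1:ℕ) : ℝ) - 3/2) = (-(k:ℝ) - 3/2) + (-1) := by push_cast; ring
    rw [hexp, Real.rpow_add hw, Real.rpow_neg_one, poch_succ, Nat.factorial_succ]
    have hf : ((k.factorial : ℝ)) ≠ 0 := by positivity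
    have hk1 : ((k:ℝ)+1) ≠ 0 := by positivity
    push_cast
    field_simp
    ring
  have hB : ∑ ℓ ∈ Finset.range (k + 2),
        poch (((k+1:ℕ) : ℝ) + 3/2 - ℓ) ℓ / poch (((k+1:ℕ) : ℝ) + 1 - ℓ) ℓ * (1 - z) ^ (-(ℓ : ℤ) - 1)
      = ((2*(k:ℝ)+3)/(2*(k:ℝ)+2) * (∑ ℓ ∈ Finset.range (k + 1),
          poch ((k:ℝ) + 3/2 - ℓ) ℓ / poch ((k:ℝ) + 1 - ℓ) ℓ * (1 - z) ^ (-(ℓ : ℤ) - 1)) + 1)/(1-z) := by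
    rw [Finset.sum_range_succ']
    have h00 : poch (((k+1:ℕ) : ℝ) + 3/2 - (0:ℕ)) 0 / poch (((k+1:ℕ) : ℝ) + 1 - (0:ℕ)) 0
        * (1 - z) ^ (-((0:ℕ) : ℤ) - 1) = (1-z)⁻¹ := by
      rw [poch_zero, poch_zero]
      norm_num
    rw [h00]
    have hterm : ∀ ℓ ∈ Finset.range (k+1),
        poch (((k+1:ℕ) : ℝ) + 3/2 - ((ℓ+1:ℕ):ℝ)) (ℓ+1) / poch (((k+1:ℕ) : ℝ) + 1 - ((ℓ+1:ℕ):ℝ)) (ℓ+1)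
          * (1 - z) ^ (-((ℓ+1:ℕ) : ℤ) - 1)
        = ((2*(k:ℝ)+3)/(2*(k:ℝ)+2) * (1-z)⁻¹)
          * (poch ((k:ℝ) + 3/2 - ℓ) ℓ / poch ((k:ℝ) + 1 - ℓ) ℓ * (1 - z) ^ (-(ℓ : ℤ) - 1)) := by
      intro ℓ hℓ
      have hlk : ℓ ≤ k := Nat.lt_succ_iff.mp (Finset.mem_range.mp hℓ)
      have hc := c_succ k ℓ hlk
      have hz1 : (-((ℓ+1:ℕ) : ℤ) - 1) = (-(ℓ : ℤ) - 1) + (-1) := by push_cast; ring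
      rw [hz1, zpow_add₀ hwne, zpow_neg_one]
      have harg1 : (((k+1:ℕ) : ℝ) + 3/2 - ((ℓ+1:ℕ):ℝ)) = ((k:ℝ)+1) + 3/2 - ((ℓ:ℝ)+1) := by
        push_cast; ring
      have harg2 : (((k+1:ℕ) : ℝ) + 1 - ((ℓ+1:ℕ):ℝ)) = ((k:ℝ)+1) + 1 - ((ℓ:ℝ)+1) := by
        push_cast; ring
      rw [harg1, harg2, hc]
      have h2k2 : (2*(k:ℝ)+2) ≠ 0 := by positivity
      have hk1 : ((k:ℝ)+1) ≠ 0 := by positivity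
      field_simp
    rw [Finset.sum_congr rfl hterm, ← Finset.mul_sum]
    field_simp
  unfold RR
  push_cast at hA hB ⊢
  rw [hA, hB, ← add_div]
  congr 1
  ring

theorem stmt_aux (k : ℕ) {z : ℝ} (h0 : 0 < z) (h1 : z < 1) :
    HasSum (fun n : ℕ => 2 * ((k : ℝ) + 1) * (poch ((k : ℝ) + 2) n / poch (3 / 2) n) * z ^ n)
      (RR k z) := by
  have hw : (0:ℝ) < 1 - z := by linarith
  have hwne : (1:ℝ) - z ≠ 0 := hw.ne'
  have hsz : (0:ℝ) < Real.sqrt z := Real.sqrt_pos.mpr h0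
  have hsw : (0:ℝ) < Real.sqrt (1-z) := Real.sqrt_pos.mpr hw
  induction k with
  | zero =>
    have hG := hasSum_G h0 h1
    have hfun : (fun n : ℕ => aa n * z^n)
        = fun n : ℕ => poch 1 n / poch (3/2) n * z ^ n := by
      funext n
      rw [aa, poch_one]
    rw [hfun] at hG
    have hstep := step (le_refl 1) h0 h1 hG
    have hmul := hstep.mul_left 2
    have e2 : (1:ℝ) + 1 = 2 := by norm_num
    rw [e2] at hmul
    convert hmul using 1
    · rfl
    · funext n
      push_cast
      ring
    · unfold RR
      rw [Finset.sum_range_one]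
      simp only [Nat.cast_zero, poch_zero, Nat.factorial_zero, Nat.cast_one]
      have hexp : (1-z) ^ (-(0:ℝ) - 3/2) = ((1-z) * Real.sqrt (1-z))⁻¹ := by
        rw [show (-(0:ℝ)-3/2) = -(3/2) by norm_num, Real.rpow_neg hw.le]
        congr 1
        rw [show ((3:ℝ)/2) = 1 + 1/2 by norm_num, Real.rpow_add hw, Real.rpow_one,
          Real.sqrt_eq_rpow]
      rw [hexp]
      have hz : ((1-z):ℝ) ^ (-(0:ℤ)-1) = (1-z)⁻¹ := by
        norm_num
      rw [hz]
      have hss : Real.sqrt (1-z) * Real.sqrt (1-z) = 1 - z := Real.mul_self_sqrt hw.le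
      field_simp
      ring
  | succ k ih =>
    have hk1 : (0:ℝ) < (k:ℝ) + 1 := by positivity
    have hb : (1:ℝ) ≤ (k:ℝ) + 2 := by
      have : (0:ℝ) ≤ (k:ℝ) := Nat.cast_nonneg k
      linarith
    have hs : HasSum (fun n : ℕ => poch ((k:ℝ)+2) n / poch (3/2) n * z^n)
        (RR k z / (2*((k:ℝ)+1))) := by
      have h := ih.div_const (2*((k:ℝ)+1))
      have hfun : (fun n : ℕ => 2 * ((k : ℝ) + 1) * (poch ((k : ℝ) + 2) n / poch (3 / 2) n) * z ^ n
            / (2*((k:ℝ)+1)))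
          = fun n : ℕ => poch ((k:ℝ)+2) n / poch (3/2) n * z^n := by
        funext n
        have hne : (2*((k:ℝ)+1)) ≠ 0 := by positivity
        have e : 2 * ((k : ℝ) + 1) * (poch ((k : ℝ) + 2) n / poch (3 / 2) n) * z ^ n
            = (poch ((k:ℝ)+2) n / poch (3/2) n * z^n) * (2*((k:ℝ)+1)) := by ring
        rw [e, mul_div_assoc, div_self hne, mul_one]
      rwa [hfun] at h
    have hstep := step hb h0 h1 hs
    have hmul := hstep.mul_left (2*((k:ℝ)+2))
    convert hmul using 1
    · rfl
    · funext n
      have harg : ((k:ℝ)+1) + 2 = ((k:ℝ)+2) + 1 := by ring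
      push_cast
      rw [harg]
      ring
    · rw [RR_rec k h0 h1]
      have h2k2 : (2*(k:ℝ)+2) ≠ 0 := by positivity
      have hk2 : ((k:ℝ)+2) ≠ 0 := by positivity
      field_simp
      ring

/-- Closed form for `2(k+1)·₂F₁(1, k+2; 3/2; z)`. -/
theorem stmt6 (k : ℕ) (z : ℝ) (h0 : 0 < z) (h1 : z < 1) :
    HasSum
      (fun n : ℕ => 2 * ((k : ℝ) + 1) * (poch ((k : ℝ) + 2) n / poch (3 / 2) n) * z ^ n)
      (poch (3 / 2) k / (k.factorial : ℝ) * (Real.arcsin (Real.sqrt z) / Real.sqrt z) *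
          (1 - z) ^ (-(k : ℝ) - 3 / 2)
        + ∑ ℓ ∈ Finset.range (k + 1),
            poch ((k : ℝ) + 3 / 2 - ℓ) ℓ / poch ((k : ℝ) + 1 - ℓ) ℓ * (1 - z) ^ (-(ℓ : ℤ) - 1)) :=
  stmt_aux k h0 h1
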